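/- Let f : ℝ × ℝ → ℝ be analytic at (0,0) such that, on some neighbourhood of (0,0), f(z, -ρ) = f(z, ρ) (f is even in its second variable) and f(z, 0) = 0. Then there exists a function g : ℝ × ℝ → ℝ which is analytic at (0,0) such that f(z, ρ) = ρ² · g(z, ρ) on a neighbourhood of (0,0). -/

import Mathlib

open Filter Finset
open scoped NNReal ENNReal

noncomputable section Stmt1Aux

/-- The second basis vector of `ℝ × ℝ`. -/
private def e2 : ℝ × ℝ := (0, 1)

private lemma norm_e2 : ‖e2‖ = 1 := by
  show ‖(((0 : ℝ), (1 : ℝ)) : ℝ × ℝ)‖ = 1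
  rw [Prod.norm_def]
  simp

/-- Projection onto the first coordinate, as a map `ℝ × ℝ → ℝ × ℝ`. -/
private def Pz : (ℝ × ℝ) →L[ℝ] (ℝ × ℝ) :=
  (ContinuousLinearMap.inl ℝ ℝ ℝ).comp (ContinuousLinearMap.fst ℝ ℝ ℝ)

private lemma Pz_apply (x : ℝ × ℝ) : Pz x = (x.1, 0) := rfl

private lemma norm_Pz_apply_le (x : ℝ × ℝ) : ‖Pz x‖ ≤ ‖x‖ := by
  rw [Pz_apply, Prod.norm_def, Prod.norm_def]
  simp only [norm_zero]
  exact max_le_max le_rfl (norm_nonneg _)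

private lemma norm_Pz_le : ‖Pz‖ ≤ 1 :=
  ContinuousLinearMap.opNorm_le_bound _ zero_le_one fun x => by
    rw [one_mul]; exact norm_Pz_apply_le x

/-- The multilinear map `v ↦ p (Pz v₀, …, Pz v_{κ-1}, e2, v_κ, …, v_{n-1})`
(with `e2` inserted in slot `κ`). -/
private def Bmap (n : ℕ) (κ : Fin (n + 1))
    (p : ContinuousMultilinearMap ℝ (fun _ : Fin (n + 1) => ℝ × ℝ) ℝ) :
    ContinuousMultilinearMap ℝ (fun _ : Fin n => ℝ × ℝ) ℝ :=
  ((ContinuousMultilinearMap.domDomCongr κ.cycleRange p).curryLeft e2).compContinuousLinearMap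
    fun i : Fin n => if (i : ℕ) < (κ : ℕ) then Pz else ContinuousLinearMap.id ℝ (ℝ × ℝ)

private lemma norm_Bmap_le (n : ℕ) (κ : Fin (n + 1))
    (p : ContinuousMultilinearMap ℝ (fun _ : Fin (n + 1) => ℝ × ℝ) ℝ) :
    ‖Bmap n κ p‖ ≤ ‖p‖ := by
  refine le_trans (ContinuousMultilinearMap.norm_compContinuousLinearMap_le _ _) ?_
  have h1 : ‖(ContinuousMultilinearMap.domDomCongr κ.cycleRange p).curryLeft e2‖ ≤ ‖p‖ := by
    refine le_trans (ContinuousLinearMap.le_opNorm _ _) ?_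
    rw [ContinuousMultilinearMap.curryLeft_norm, norm_e2, mul_one,
      ContinuousMultilinearMap.norm_domDomCongr]
  have h2 : (∏ i : Fin n,
      ‖if (i : ℕ) < (κ : ℕ) then Pz else ContinuousLinearMap.id ℝ (ℝ × ℝ)‖) ≤ 1 := by
    refine Finset.prod_le_one (fun i _ => norm_nonneg _) (fun i _ => ?_)
    split
    · exact norm_Pz_le
    · exact ContinuousLinearMap.norm_id_le
  calc ‖(ContinuousMultilinearMap.domDomCongr κ.cycleRange p).curryLeft e2‖ *
        ∏ i : Fin n, ‖if (i : ℕ) < (κ : ℕ) then Pz else ContinuousLinearMap.id ℝ (ℝ × ℝ)‖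
      ≤ ‖p‖ * 1 := mul_le_mul h1 h2 (Finset.prod_nonneg fun i _ => norm_nonneg _) (norm_nonneg p)
    _ = ‖p‖ := mul_one _

private lemma Bmap_apply_diag (n : ℕ) (κ : Fin (n + 1))
    (p : ContinuousMultilinearMap ℝ (fun _ : Fin (n + 1) => ℝ × ℝ) ℝ) (x : ℝ × ℝ) :
    Bmap n κ p (fun _ => x)
      = p (Function.update
          (fun i : Fin (n + 1) => if (i : ℕ) < (κ : ℕ) then Pz x else x) κ e2) := by
  rw [Bmap, ContinuousMultilinearMap.compContinuousLinearMap_apply,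
    ContinuousMultilinearMap.curryLeft_apply, ContinuousMultilinearMap.domDomCongr_apply]
  congr 1
  funext i
  rcases lt_trichotomy (i : ℕ) (κ : ℕ) with h | h | h
  · -- i < κ
    have hiκ : i < κ := Fin.lt_def.2 h
    have hval : ((κ.cycleRange i : Fin (n + 1)) : ℕ) = (i : ℕ) + 1 :=
      Fin.coe_cycleRange_of_lt hiκ
    have hlt : (i : ℕ) < n := by
      have := κ.isLt; omega
    have hsucc : κ.cycleRange i = Fin.succ ⟨(i : ℕ), hlt⟩ := by
      apply Fin.ext; rw [hval]; rfl
    rw [Function.update_of_ne (ne_of_lt hiκ), if_pos h, hsucc, Fin.cons_succ]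
    simp only [h, if_pos]
  · -- i = κ
    have hiκ : i = κ := Fin.ext h
    subst hiκ
    rw [Fin.cycleRange_self, Fin.cons_zero, Function.update_self]
  · -- κ < i
    have hiκ : κ < i := Fin.lt_def.2 h
    have h1 : 1 ≤ (i : ℕ) := by omega
    have hlt : (i : ℕ) - 1 < n := by
      have := i.isLt; omega
    have hsucc : i = Fin.succ ⟨(i : ℕ) - 1, hlt⟩ := by
      apply Fin.ext; simp [Fin.val_succ]; omega
    rw [Fin.cycleRange_of_gt hiκ, Function.update_of_ne (ne_of_gt hiκ),
      if_neg (by omega : ¬ (i : ℕ) < (κ : ℕ)), hsucc, Fin.cons_succ]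
    have : ¬ ((⟨(i : ℕ) - 1, hlt⟩ : Fin n) : ℕ) < (κ : ℕ) := by
      simp only [Fin.val_mk]; omega
    rw [if_neg this]
    rfl

private lemma telescope (n : ℕ)
    (p : ContinuousMultilinearMap ℝ (fun _ : Fin (n + 1) => ℝ × ℝ) ℝ) (x : ℝ × ℝ) :
    (p fun _ => x) - (p fun _ => Pz x)
      = x.2 * ∑ κ : Fin (n + 1), Bmap n κ p (fun _ => x) := by
  set v : ℕ → Fin (n + 1) → ℝ × ℝ := fun j i => if (i : ℕ) < j then Pz x else x with hv
  have h0 : (fun _ : Fin (n + 1) => x) = v 0 := by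
    funext i; simp [hv]
  have hend : (fun _ : Fin (n + 1) => Pz x) = v (n + 1) := by
    funext i; simp [hv, i.isLt]
  have step : ∀ κ : Fin (n + 1),
      p (v (κ : ℕ)) - p (v ((κ : ℕ) + 1)) = x.2 * Bmap n κ p (fun _ => x) := by
    intro κ
    have hupd1 : v (κ : ℕ) = Function.update (v (κ : ℕ)) κ x := by
      funext i
      rcases eq_or_ne i κ with rfl | hne
      · rw [Function.update_self]; simp [hv]
      · rw [Function.update_of_ne hne]
    have hupd2 : v ((κ : ℕ) + 1) = Function.update (v (κ : ℕ)) κ (Pz x) := by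
      funext i
      rcases eq_or_ne i κ with rfl | hne
      · rw [Function.update_self]; simp [hv]
      · rw [Function.update_of_ne hne]
        have : (i : ℕ) ≠ (κ : ℕ) := fun hc => hne (Fin.ext hc)
        simp only [hv]
        by_cases hi : (i : ℕ) < (κ : ℕ)
        · rw [if_pos hi, if_pos (by omega)]
        · rw [if_neg hi, if_neg (by omega)]
    have hsub : x - Pz x = x.2 • e2 := by
      rw [Pz_apply]
      show (x.1 - x.1, x.2 - 0) = x.2 • ((0 : ℝ), (1 : ℝ))
      simp [Prod.smul_mk]
    calc p (v (κ : ℕ)) - p (v ((κ : ℕ) + 1))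
        = p (Function.update (v (κ : ℕ)) κ x) - p (Function.update (v (κ : ℕ)) κ (Pz x)) := by
          rw [← hupd1, ← hupd2]
      _ = p (Function.update (v (κ : ℕ)) κ (x - Pz x)) :=
          (p.map_update_sub _ _ _ _).symm
      _ = x.2 * p (Function.update (v (κ : ℕ)) κ e2) := by
          rw [hsub, p.map_update_smul, smul_eq_mul]
      _ = x.2 * Bmap n κ p (fun _ => x) := by
          rw [Bmap_apply_diag]
  calc (p fun _ => x) - (p fun _ => Pz x)
      = p (v 0) - p (v (n + 1)) := by rw [h0, hend]
    _ = ∑ k ∈ Finset.range (n + 1), (p (v k) - p (v (k + 1))) :=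
        (Finset.sum_range_sub' (fun k => p (v k)) (n + 1)).symm
    _ = ∑ κ : Fin (n + 1), (p (v (κ : ℕ)) - p (v ((κ : ℕ) + 1))) :=
        (Fin.sum_univ_eq_sum_range (fun k => p (v k) - p (v (k + 1))) (n + 1)).symm
    _ = ∑ κ : Fin (n + 1), x.2 * Bmap n κ p (fun _ => x) :=
        Finset.sum_congr rfl fun κ _ => step κ
    _ = x.2 * ∑ κ : Fin (n + 1), Bmap n κ p (fun _ => x) := (Finset.mul_sum _ _ _).symm

/-- Division lemma: if `f` is analytic at the origin and vanishes on the first axis near the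
origin, then `f p = p.2 * h p` near the origin for some `h` analytic at the origin. -/
private lemma div_lemma (f : ℝ × ℝ → ℝ) (hf : AnalyticAt ℝ f (0, 0))
    (hzero : ∀ᶠ p : ℝ × ℝ in nhds (0, 0), f (p.1, 0) = 0) :
    ∃ h : ℝ × ℝ → ℝ, AnalyticAt ℝ h (0, 0) ∧
      ∀ᶠ p : ℝ × ℝ in nhds (0, 0), f p = p.2 * h p := by
  obtain ⟨p, r, hfp⟩ := hf
  obtain ⟨ε, hε, hball⟩ := EMetric.mem_nhds_iff.1 hzero
  -- the series for the quotient
  set q : FormalMultilinearSeries ℝ (ℝ × ℝ) ℝ :=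
    (fun m => ∑ κ : Fin (m + 1), Bmap m κ (p (m + 1))) with hq_def
  -- bound on the norms of `q`
  have hqnorm : ∀ m : ℕ, ‖q m‖ ≤ ((m : ℝ) + 1) * ‖p (m + 1)‖ := by
    intro m
    refine le_trans (norm_sum_le _ _) ?_
    calc (∑ κ : Fin (m + 1), ‖Bmap m κ (p (m + 1))‖)
        ≤ ∑ _κ : Fin (m + 1), ‖p (m + 1)‖ :=
          Finset.sum_le_sum fun κ _ => norm_Bmap_le m κ (p (m + 1))
      _ = ((m : ℝ) + 1) * ‖p (m + 1)‖ := by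
          rw [Finset.sum_const, Finset.card_univ, Fintype.card_fin, nsmul_eq_mul]
          push_cast; ring
  -- a radius on which `q` converges
  obtain ⟨r₀, hr₀pos, hr₀lt⟩ : ∃ r₀ : ℝ≥0, 0 < (r₀ : ENNReal) ∧ (r₀ : ENNReal) < r := by
    rcases ENNReal.lt_iff_exists_nnreal_btwn.1 hfp.r_pos with ⟨r₀, h1, h2⟩
    exact ⟨r₀, h1, h2⟩
  obtain ⟨C, hC, hpC⟩ := p.norm_mul_pow_le_of_lt_radius (lt_of_lt_of_le hr₀lt hfp.r_le)
  have hr₀pos' : (0 : ℝ) < r₀ := by exact_mod_cast hr₀pos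
  set r₁ : ℝ≥0 := r₀ / 2 with hr₁def
  have hr₁pos : (0 : ℝ) < (r₁ : ℝ) := by
    rw [hr₁def]; push_cast; linarith
  have hr₁pos' : (0 : ℝ≥0) < r₁ := by exact_mod_cast hr₁pos
  have hqrad : (r₁ : ENNReal) ≤ q.radius := by
    refine q.le_radius_of_bound (2 * C / (r₀ : ℝ)) fun m => ?_
    have hb := hqnorm m
    have hcast : ((r₁ : ℝ)) = (r₀ : ℝ) / 2 := by rw [hr₁def]; push_cast; ring
    have hm : ((m : ℝ) + 1) ≤ 2 * 2 ^ m := by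
      have := Nat.lt_two_pow_self (n := m + 1)
      have h2 : (m + 1 : ℕ) ≤ 2 * 2 ^ m := by
        rw [pow_succ] at this; omega
      exact_mod_cast h2
    have hA : (0 : ℝ) ≤ ‖p (m + 1)‖ := norm_nonneg _
    have h1 : ‖p (m + 1)‖ * (r₀ : ℝ) ^ (m + 1) ≤ C := hpC (m + 1)
    calc ‖q m‖ * (r₁ : ℝ) ^ m
        ≤ (((m : ℝ) + 1) * ‖p (m + 1)‖) * (r₁ : ℝ) ^ m := by
          exact mul_le_mul_of_nonneg_right hb (pow_nonneg (by positivity) m)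
      _ = (((m : ℝ) + 1) * ‖p (m + 1)‖ * (r₀ : ℝ) ^ m) / 2 ^ m := by
          rw [hcast, div_pow]; ring
      _ ≤ 2 * C / (r₀ : ℝ) := by
          rw [div_le_div_iff₀ (by positivity) hr₀pos']
          calc ((m : ℝ) + 1) * ‖p (m + 1)‖ * (r₀ : ℝ) ^ m * (r₀ : ℝ)
              = ((m : ℝ) + 1) * (‖p (m + 1)‖ * (r₀ : ℝ) ^ (m + 1)) := by ring
            _ ≤ (2 * 2 ^ m) * C :=
                mul_le_mul hm h1 (by positivity) (by positivity)
            _ = 2 * C * 2 ^ m := by ring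
  have hqradpos : (0 : ENNReal) < q.radius :=
    lt_of_lt_of_le (by exact_mod_cast hr₁pos') hqrad
  have hqsum : HasFPowerSeriesOnBall q.sum q 0 q.radius :=
    q.hasFPowerSeriesOnBall hqradpos
  refine ⟨q.sum, ?_, ?_⟩
  · rw [Prod.mk_zero_zero]
    exact hqsum.hasFPowerSeriesAt.analyticAt
  · set δ : ENNReal := min (min r ε) (r₁ : ENNReal) with hδdef
    have hδpos : 0 < δ := by
      refine lt_min (lt_min hfp.r_pos hε) ?_
      exact_mod_cast hr₁pos'
    have hmem : Metric.eball ((0, 0) : ℝ × ℝ) δ ∈ nhds ((0, 0) : ℝ × ℝ) :=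
      EMetric.ball_mem_nhds _ hδpos
    filter_upwards [hmem] with x hx
    -- memberships in the various balls
    have hx' : x ∈ Metric.eball ((0, 0) : ℝ × ℝ) δ := hx
    rw [Prod.mk_zero_zero] at hx'
    rw [mem_emetric_ball_zero_iff] at hx'
    have hxnn : (‖x‖₊ : ENNReal) < δ := hx'
    have hPxnn : (‖Pz x‖₊ : ENNReal) ≤ (‖x‖₊ : ENNReal) := by
      rw [ENNReal.coe_le_coe, ← NNReal.coe_le_coe, coe_nnnorm, coe_nnnorm]
      exact norm_Pz_apply_le x
    have hxr : x ∈ Metric.eball (0 : ℝ × ℝ) r := by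
      rw [mem_emetric_ball_zero_iff]
      exact lt_of_lt_of_le hxnn (le_trans (min_le_left _ _) (min_le_left _ _))
    have hPxr : Pz x ∈ Metric.eball (0 : ℝ × ℝ) r := by
      rw [mem_emetric_ball_zero_iff]
      exact lt_of_le_of_lt hPxnn (lt_of_lt_of_le hxnn
        (le_trans (min_le_left _ _) (min_le_left _ _)))
    have hxε : x ∈ Metric.eball ((0, 0) : ℝ × ℝ) ε := by
      rw [Prod.mk_zero_zero, mem_emetric_ball_zero_iff]
      exact lt_of_lt_of_le hxnn (le_trans (min_le_left _ _) (min_le_right _ _))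
    have hxq : x ∈ Metric.eball (0 : ℝ × ℝ) q.radius := by
      rw [mem_emetric_ball_zero_iff]
      exact lt_of_lt_of_le hxnn (le_trans (min_le_right _ _) hqrad)
    -- the two hasSum facts for `p`
    have hA : HasSum (fun n => p n fun _ => x) (f x) := by
      have := hfp.hasSum hxr
      simpa [Prod.mk_zero_zero] using this
    have hfPx : f (Pz x) = 0 := hball hxε
    have hB : HasSum (fun n => p n fun _ => Pz x) 0 := by
      have := hfp.hasSum hPxr
      rw [Prod.mk_zero_zero, zero_add] at this
      rwa [hfPx] at this
    have hAB : HasSum (fun n => (p n fun _ => x) - (p n fun _ => Pz x)) (f x) := by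
      have := hA.sub hB
      rwa [sub_zero] at this
    -- shift the index by one
    have hshift := (hasSum_nat_add_iff'
      (f := fun n => (p n fun _ => x) - (p n fun _ => Pz x)) 1).2 hAB
    have hzeroterm : (p 0 fun _ => x) - (p 0 fun _ => Pz x) = 0 := by
      have : (fun _ : Fin 0 => x) = (fun _ : Fin 0 => Pz x) := Subsingleton.elim _ _
      rw [this, sub_self]
    rw [Finset.sum_range_one, hzeroterm, sub_zero] at hshift
    -- identify the shifted terms
    have hterm : ∀ m : ℕ,
        (p (m + 1) fun _ => x) - (p (m + 1) fun _ => Pz x) = x.2 * q m (fun _ => x) := by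
      intro m
      rw [telescope]
      congr 1
      rw [hq_def]
      exact (ContinuousMultilinearMap.sum_apply _ _ _).symm
    rw [funext hterm] at hshift
    have hqx : HasSum (fun m => x.2 * q m (fun _ => x)) (x.2 * q.sum x) :=
      (q.hasSum hxq).mul_left x.2
    exact hshift.unique hqx

end Stmt1Aux

/-- If `f : ℝ × ℝ → ℝ` is analytic at `(0,0)`, even in its second
variable near `(0,0)`, and vanishes on the axis `ρ = 0` near `(0,0)`, then
`f(z,ρ) = ρ² · g(z,ρ)` near `(0,0)` for some `g` analytic at `(0,0)`. -/
theorem stmt_1 (f : ℝ × ℝ → ℝ) (hf : AnalyticAt ℝ f (0, 0))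
    (heven : ∀ᶠ p : ℝ × ℝ in nhds (0, 0), f (p.1, -p.2) = f (p.1, p.2))
    (hzero : ∀ᶠ p : ℝ × ℝ in nhds (0, 0), f (p.1, 0) = 0) :
    ∃ g : ℝ × ℝ → ℝ, AnalyticAt ℝ g (0, 0) ∧
      ∀ᶠ p : ℝ × ℝ in nhds (0, 0), f p = p.2 ^ 2 * g p := by
  obtain ⟨h₁, h₁a, h₁eq⟩ := div_lemma f hf hzero
  -- `h₁` is continuous near the origin
  have hcont : ∀ᶠ w : ℝ × ℝ in nhds (0, 0), ContinuousAt h₁ w := by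
    filter_upwards [h₁a.eventually_analyticAt] with w hw using hw.continuousAt
  obtain ⟨ε, hε, hball⟩ := Metric.mem_nhds_iff.1 ((h₁eq.and (heven.and hcont)))
  -- `h₁` vanishes on the first axis near the origin
  have hz' : ∀ᶠ w : ℝ × ℝ in nhds (0, 0), h₁ (w.1, 0) = 0 := by
    rw [Metric.eventually_nhds_iff]
    refine ⟨ε, hε, fun w hw => ?_⟩
    set z : ℝ := w.1 with hz
    have hz1 : ‖z‖ < ε := by
      have h1 : dist w (0, 0) = ‖w‖ := by
        rw [dist_eq_norm, Prod.mk_zero_zero, sub_zero]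
      have h2 : ‖z‖ ≤ ‖w‖ := by
        rw [Prod.norm_def]; exact le_max_left _ _
      calc ‖z‖ ≤ ‖w‖ := h2
        _ < ε := by rw [← h1]; exact hw
    have hmemb : ∀ ρ : ℝ, ‖ρ‖ < ε → ((z, ρ) : ℝ × ℝ) ∈ Metric.ball ((0, 0) : ℝ × ℝ) ε := by
      intro ρ hρ
      rw [Metric.mem_ball, dist_eq_norm]
      have : ((z, ρ) : ℝ × ℝ) - (0, 0) = (z, ρ) := by norm_num
      rw [this, Prod.norm_def]
      exact max_lt hz1 hρ
    -- the odd identity for `ρ ≠ 0`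
    have hodd : ∀ ρ : ℝ, ρ ≠ 0 → ‖ρ‖ < ε → h₁ (z, ρ) + h₁ (z, -ρ) = 0 := by
      intro ρ hρ0 hρ
      have hmem1 := hball (hmemb ρ hρ)
      have hmem2 := hball (hmemb (-ρ) (by rwa [norm_neg]))
      -- f (z,ρ) = ρ * h₁ (z,ρ), f(z,-ρ) = -ρ * h₁ (z,-ρ), f(z,-ρ) = f(z,ρ)
      have e1 : f (z, ρ) = ρ * h₁ (z, ρ) := hmem1.1
      have e2 : f (z, -ρ) = -ρ * h₁ (z, -ρ) := hmem2.1
      have e3 : f (z, -ρ) = f (z, ρ) := hmem1.2.1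
      have : ρ * h₁ (z, ρ) = -ρ * h₁ (z, -ρ) := by rw [← e1, ← e3, e2]
      have hfac : ρ * (h₁ (z, ρ) + h₁ (z, -ρ)) = 0 := by linarith
      rcases mul_eq_zero.1 hfac with h | h
      · exact absurd h hρ0
      · exact h
    -- continuity of `ρ ↦ h₁ (z, ρ) + h₁ (z, -ρ)` at `0`
    have hc0 : ContinuousAt h₁ (z, 0) := (hball (hmemb 0 (by simpa using hε))).2.2
    have t1 : Filter.Tendsto (fun ρ : ℝ => ((z, ρ) : ℝ × ℝ)) (nhds 0) (nhds (z, 0)) :=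
      Continuous.tendsto' (by continuity) 0 (z, 0) rfl
    have t2 : Filter.Tendsto (fun ρ : ℝ => ((z, -ρ) : ℝ × ℝ)) (nhds 0) (nhds (z, 0)) :=
      Continuous.tendsto' (by continuity) 0 (z, 0) (by norm_num)
    have l1 : Filter.Tendsto (fun ρ : ℝ => h₁ (z, ρ)) (nhds 0) (nhds (h₁ (z, 0))) :=
      hc0.tendsto.comp t1
    have l2 : Filter.Tendsto (fun ρ : ℝ => h₁ (z, -ρ)) (nhds 0) (nhds (h₁ (z, 0))) :=
      hc0.tendsto.comp t2
    -- two limits along the punctured neighbourhood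
    have hT1 : Filter.Tendsto (fun ρ : ℝ => h₁ (z, ρ) + h₁ (z, -ρ)) (nhdsWithin 0 {0}ᶜ)
        (nhds (h₁ (z, 0) + h₁ (z, 0))) :=
      (l1.add l2).mono_left nhdsWithin_le_nhds
    have hT2 : Filter.Tendsto (fun ρ : ℝ => h₁ (z, ρ) + h₁ (z, -ρ)) (nhdsWithin 0 {0}ᶜ)
        (nhds 0) := by
      apply Filter.Tendsto.congr' _ tendsto_const_nhds
      have hev1 : ∀ᶠ ρ : ℝ in nhdsWithin 0 {0}ᶜ, ‖ρ‖ < ε := by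
        refine Filter.Eventually.filter_mono nhdsWithin_le_nhds ?_
        exact Metric.eventually_nhds_iff.2 ⟨ε, hε, fun {y} hy => by
          simpa [Real.dist_eq, Real.norm_eq_abs] using hy⟩
      have hev2 : ∀ᶠ ρ : ℝ in nhdsWithin 0 {0}ᶜ, ρ ≠ 0 := by
        filter_upwards [self_mem_nhdsWithin] with ρ hρ
        exact hρ
      filter_upwards [hev1, hev2] with ρ h1 h2
      exact (hodd ρ h2 h1).symm
    have h2 : h₁ (z, 0) + h₁ (z, 0) = 0 := tendsto_nhds_unique hT1 hT2
    linarith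
  obtain ⟨g, ga, geq⟩ := div_lemma h₁ h₁a hz'
  refine ⟨g, ga, ?_⟩
  filter_upwards [h₁eq, geq] with w e1 e2
  rw [e1, e2]
  ring
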